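/- The extended Lorentz cone L = {(x,u) ∈ ℝ^p × ℝ^q : x ≥ ‖u‖e} is subdual, i.e., L ⊆ L*, and L is self-dual (L = L*) if and only if p = 1. -/

import Mathlib

open scoped RealInnerProductSpace

/-- The extended Lorentz cone `L = {(x,u) ∈ ℝ^p × ℝ^q : x ≥ ‖u‖e}`. -/
def extendedLorentzCone (p q : ℕ) :
    Set (EuclideanSpace ℝ (Fin p) × EuclideanSpace ℝ (Fin q)) :=
  {z | ∀ i, ‖z.2‖ ≤ z.1 i}

/-- The dual of a set `S ⊆ ℝ^p × ℝ^q`. -/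
def dualSet (p q : ℕ)
    (S : Set (EuclideanSpace ℝ (Fin p) × EuclideanSpace ℝ (Fin q))) :
    Set (EuclideanSpace ℝ (Fin p) × EuclideanSpace ℝ (Fin q)) :=
  {z | ∀ w ∈ S, (0:ℝ) ≤ ⟪z.1, w.1⟫ + ⟪z.2, w.2⟫}

lemma inner_eq_sum (p : ℕ) (x y : EuclideanSpace ℝ (Fin p)) :
    ⟪x, y⟫ = ∑ i, x i * y i := by
  simp [PiLp.inner_apply, RCLike.inner_apply, mul_comm]

lemma subdual_aux (p q : ℕ) (hp : 0 < p) :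
    extendedLorentzCone p q ⊆ dualSet p q (extendedLorentzCone p q) := by
  rintro ⟨y, v⟩ hz ⟨x, u⟩ hw
  have hu0 : (0:ℝ) ≤ ‖u‖ := norm_nonneg _
  have hv0 : (0:ℝ) ≤ ‖v‖ := norm_nonneg _
  have h1 : ∀ i : Fin p, ‖v‖ * ‖u‖ ≤ y i * x i := fun i =>
    mul_le_mul (hz i) (hw i) hu0 (le_trans hv0 (hz i))
  have hsum : ‖v‖ * ‖u‖ ≤ ∑ i, y i * x i := by
    calc ‖v‖ * ‖u‖ ≤ y ⟨0, hp⟩ * x ⟨0, hp⟩ := h1 _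
    _ ≤ ∑ i, y i * x i := by
        apply Finset.single_le_sum (fun i _ => le_trans (mul_nonneg hv0 hu0) (h1 i))
          (Finset.mem_univ _)
  have h2 : -(‖v‖ * ‖u‖) ≤ ⟪v, u⟫ := neg_le_of_abs_le (abs_real_inner_le_norm v u)
  have := inner_eq_sum p y x
  simp only [Set.mem_setOf_eq]
  rw [inner_eq_sum p y x]
  nlinarith [mul_nonneg hv0 hu0]

theorem stmt2 (p q : ℕ) (hp : 0 < p) (hq : 0 < q) :
    extendedLorentzCone p q ⊆ dualSet p q (extendedLorentzCone p q) ∧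
    (extendedLorentzCone p q = dualSet p q (extendedLorentzCone p q) ↔ p = 1) := by
  refine ⟨subdual_aux p q hp, ?_, ?_⟩
  · -- L = L* → p = 1
    intro hEq
    by_contra hne
    have hp2 : 2 ≤ p := by omega
    -- construct z = (y, v) in dual but not in L
    set i0 : Fin p := ⟨0, hp⟩
    set i1 : Fin p := ⟨1, hp2⟩
    set y : EuclideanSpace ℝ (Fin p) := WithLp.toLp 2 (fun i => if i = i0 then 0 else 2 : Fin p → ℝ)
    set v : EuclideanSpace ℝ (Fin q) := EuclideanSpace.single ⟨0, hq⟩ 1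
    have hvn : ‖v‖ = 1 := by simp [v]
    have hzd : (y, v) ∈ dualSet p q (extendedLorentzCone p q) := by
      rintro ⟨x, u⟩ hw
      have hu0 : (0:ℝ) ≤ ‖u‖ := norm_nonneg _
      have hyx : ∀ i : Fin p, (0:ℝ) ≤ y i * x i := by
        intro i
        apply mul_nonneg _ (le_trans hu0 (hw i))
        by_cases h : i = i0 <;> simp [y, h]
      have h1 : 2 * ‖u‖ ≤ ∑ i, y i * x i := by
        calc 2 * ‖u‖ ≤ y i1 * x i1 := by
              have : y i1 = 2 := by
                simp only [y, PiLp.toLp_apply]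
                rw [if_neg]
                simp [i0, i1, Fin.ext_iff]
              rw [this]
              exact mul_le_mul_of_nonneg_left (hw i1) (by norm_num)
        _ ≤ ∑ i, y i * x i :=
            Finset.single_le_sum (fun i _ => hyx i) (Finset.mem_univ _)
      have h2 : -(‖v‖ * ‖u‖) ≤ ⟪v, u⟫ := neg_le_of_abs_le (abs_real_inner_le_norm v u)
      rw [hvn] at h2
      simp only [Set.mem_setOf_eq]
      rw [inner_eq_sum p y x]
      nlinarith
    rw [← hEq] at hzd
    have := hzd i0
    rw [hvn] at this
    simp [y] at this
    linarith
  · -- p = 1 → L = L*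
    intro hp1
    subst hp1
    refine Set.Subset.antisymm (subdual_aux 1 q (by norm_num)) ?_
    rintro ⟨y, v⟩ hz i
    have hi : i = 0 := Subsingleton.elim _ _
    subst hi
    have hy0 : (0:ℝ) ≤ y 0 := by
      have := hz (WithLp.toLp 2 (fun _ => 1 : Fin 1 → ℝ), (0 : EuclideanSpace ℝ (Fin q)))
        (fun j => by simp)
      simp only [Set.mem_setOf_eq] at this
      rw [inner_eq_sum] at this
      simpa using this
    rcases eq_or_lt_of_le (norm_nonneg v) with hv | hv
    · rw [← hv]; exact hy0
    · have := hz (WithLp.toLp 2 (fun _ => ‖v‖ : Fin 1 → ℝ), -v) (fun j => by simp)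
      simp only [Set.mem_setOf_eq] at this
      rw [inner_eq_sum, inner_neg_right, real_inner_self_eq_norm_sq] at this
      simp only [Fin.sum_univ_one] at this
      nlinarith
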